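/- Let x, y ∈ D admit representations m(x)·β^{e(x)} and m(y)·β^{e(y)}, let z = fl(x+y) with no overflow, and suppose z admits a representation with exponent e(z) ≤ min(e(x), e(y)). Then z = x + y exactly. -/
import Mathlib


/-- Dekker's floating point number system as a set of reals. -/
def Dekker (β : ℤ) (t : ℕ) (Emin Emax : ℤ) : Set ℝ :=
  {x | ∃ m e : ℤ, |m| < β ^ t ∧ Emin ≤ e ∧ e ≤ Emax ∧ x = (m : ℝ) * (β : ℝ) ^ e}

/-- fl is a faithful rounding into D: fl x is the largest element of D not exceeding x
or the smallest element of D not less than x. -/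
def Faithful (D : Set ℝ) (fl : ℝ → ℝ) : Prop :=
  ∀ x : ℝ, fl x ∈ D ∧
    ((fl x ≤ x ∧ ∀ a ∈ D, a ≤ x → a ≤ fl x) ∨ (x ≤ fl x ∧ ∀ a ∈ D, x ≤ a → fl x ≤ a))

lemma dekker_aux_mem (β : ℤ) (t : ℕ) (Emin Emax : ℤ) (hβ : 2 ≤ β) (ht : 1 ≤ t)
    (m e : ℤ) (hm : |m| ≤ β ^ t) (he1 : Emin ≤ e) (he2 : e ≤ Emax)
    (hne : |m| = β ^ t → e < Emax) :
    (m : ℝ) * (β : ℝ) ^ e ∈ Dekker β t Emin Emax := by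
  have hb0 : (0:ℤ) < β := by omega
  have hbR : (0:ℝ) < (β:ℝ) := by exact_mod_cast hb0
  rcases lt_or_eq_of_le hm with h | h
  · exact ⟨m, e, h, he1, he2, rfl⟩
  · have h2 : e < Emax := hne h
    have hb1 : (1:ℤ) < β := by omega
    have hlt : β ^ (t-1) < β ^ t := pow_lt_pow_right₀ hb1 (by omega)
    have habs : |(β^(t-1) : ℤ)| = β^(t-1) := abs_of_nonneg (pow_nonneg hb0.le _)
    have hmul : (β:ℤ)^(t-1) * β = β ^ t := by
      rw [← pow_succ]; congr 1; omega
    have hkey : ∀ m' : ℤ, m' * β = m → ((m:ℝ) * (β:ℝ)^e = (m':ℝ) * (β:ℝ)^(e+1)) := by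
      intro m' hm'
      rw [← hm', zpow_add_one₀ (ne_of_gt hbR)]
      push_cast; ring
    rcases (abs_eq (pow_nonneg hb0.le t)).mp h with hm' | hm'
    · exact ⟨β^(t-1), e+1, by rwa [habs], by omega, by omega,
        hkey _ (by rw [hmul, hm'])⟩
    · exact ⟨-(β^(t-1)), e+1, by rw [abs_neg, habs]; exact hlt, by omega, by omega,
        hkey _ (by rw [neg_mul, hmul, hm'])⟩


/-- if the rounded sum admits a representation with exponent
at most min(e(x), e(y)), the addition is exact. -/
theorem dekker_small_exponent_addition_exact
    (β : ℤ) (t : ℕ) (Emin Emax : ℤ) (hβ : 2 ≤ β) (ht : 1 ≤ t)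
    (fl : ℝ → ℝ) (hfl : Faithful (Dekker β t Emin Emax) fl)
    (mx ex my ey : ℤ)
    (hmx : |mx| < β ^ t) (hex1 : Emin ≤ ex) (hex2 : ex ≤ Emax)
    (hmy : |my| < β ^ t) (hey1 : Emin ≤ ey) (hey2 : ey ≤ Emax)
    (x y : ℝ) (hx : x = (mx : ℝ) * (β : ℝ) ^ ex) (hy : y = (my : ℝ) * (β : ℝ) ^ ey)
    (hov : |x + y| ≤ ((β ^ t - 1 : ℤ) : ℝ) * (β : ℝ) ^ Emax)
    (mz ez : ℤ) (hmz : |mz| < β ^ t) (hez1 : Emin ≤ ez) (hez2 : ez ≤ Emax)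
    (hz : fl (x + y) = (mz : ℝ) * (β : ℝ) ^ ez)
    (hezx : ez ≤ ex) (hezy : ez ≤ ey) :
    fl (x + y) = x + y := by
  have hb0 : (0:ℤ) < β := by omega
  have hbR : (0:ℝ) < (β:ℝ) := by exact_mod_cast hb0
  have hbz : (β:ℝ) ≠ 0 := ne_of_gt hbR
  set kx := (ex - ez).toNat with hkx
  set ky := (ey - ez).toNat with hky
  have hpx : (β:ℝ)^ex = ((β^kx : ℤ):ℝ) * (β:ℝ)^ez := by
    rw [show ex = (kx:ℤ) + ez by omega, zpow_add₀ hbz, zpow_natCast]; push_cast; ring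
  have hpy : (β:ℝ)^ey = ((β^ky : ℤ):ℝ) * (β:ℝ)^ez := by
    rw [show ey = (ky:ℤ) + ez by omega, zpow_add₀ hbz, zpow_natCast]; push_cast; ring
  set M : ℤ := mx * β^kx + my * β^ky with hM
  have hsum : x + y = (M:ℝ) * (β:ℝ)^ez := by
    rw [hx, hy, hpx, hpy, hM]; push_cast; ring
  have hpow : (0:ℝ) < (β:ℝ)^ez := zpow_pos hbR _
  have hpmax : (0:ℝ) < (β:ℝ)^Emax := zpow_pos hbR _
  obtain ⟨hmz1, hmz2⟩ := abs_lt.mp hmz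
  obtain ⟨hD, hc⟩ := hfl (x+y)
  -- contradiction from an exponent-Emax overflow on either side
  have hEmax_pow : (β:ℝ)^ez = (β:ℝ)^Emax → ez = Emax → True := fun _ _ => trivial
  rcases hc with ⟨hle, hmax⟩ | ⟨hge, hmin⟩
  · have hmzM : mz ≤ M := by
      have h1 : (mz:ℝ) * (β:ℝ)^ez ≤ (M:ℝ) * (β:ℝ)^ez := by rw [← hz, ← hsum]; exact hle
      exact_mod_cast le_of_mul_le_mul_right h1 hpow
    rcases eq_or_lt_of_le hmzM with heq | hlt
    · rw [hz, hsum, heq]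
    · exfalso
      have hstep : mz + 1 ≤ M := hlt
      have hale : ((mz+1 : ℤ):ℝ) * (β:ℝ)^ez ≤ x + y := by
        rw [hsum]
        exact mul_le_mul_of_nonneg_right (by exact_mod_cast hstep) hpow.le
      have hne : |mz + 1| = β ^ t → ez < Emax := by
        intro habs
        by_contra hcon
        have hez : ez = Emax := by omega
        have hmz1' : mz + 1 = β ^ t := by
          rcases (abs_eq (pow_nonneg hb0.le t)).mp habs with h | h
          · exact h
          · omega
        have h1 : ((β^t : ℤ):ℝ) * (β:ℝ)^Emax ≤ x + y := by
          rw [← hmz1', ← hez]; exact_mod_cast hale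
        have h2 : x + y ≤ ((β ^ t - 1 : ℤ) : ℝ) * (β:ℝ)^Emax := le_trans (le_abs_self _) hov
        have h3 : ((β^t : ℤ):ℝ) ≤ ((β ^ t - 1 : ℤ) : ℝ) :=
          le_of_mul_le_mul_right (le_trans h1 h2) hpmax
        have : (β^t : ℤ) ≤ β ^ t - 1 := by exact_mod_cast h3
        omega
      have hmem := dekker_aux_mem β t Emin Emax hβ ht (mz+1) ez
        (abs_le.mpr ⟨by omega, by omega⟩) hez1 hez2 hne
      have := hmax _ hmem hale
      rw [hz] at this
      have : (mz + 1 : ℤ) ≤ mz := by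
        have h4 : ((mz+1:ℤ):ℝ) ≤ (mz:ℝ) := le_of_mul_le_mul_right this hpow
        exact_mod_cast h4
      omega
  · have hmzM : M ≤ mz := by
      have h1 : (M:ℝ) * (β:ℝ)^ez ≤ (mz:ℝ) * (β:ℝ)^ez := by rw [← hz, ← hsum]; exact hge
      exact_mod_cast le_of_mul_le_mul_right h1 hpow
    rcases eq_or_lt_of_le hmzM with heq | hlt
    · rw [hz, hsum, heq]
    · exfalso
      have hstep : M ≤ mz - 1 := by omega
      have hale : x + y ≤ ((mz-1 : ℤ):ℝ) * (β:ℝ)^ez := by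
        rw [hsum]
        exact mul_le_mul_of_nonneg_right (by exact_mod_cast hstep) hpow.le
      have hne : |mz - 1| = β ^ t → ez < Emax := by
        intro habs
        by_contra hcon
        have hez : ez = Emax := by omega
        have hmz1' : mz - 1 = -β ^ t := by
          rcases (abs_eq (pow_nonneg hb0.le t)).mp habs with h | h
          · omega
          · exact h
        have h1 : x + y ≤ ((-β^t : ℤ):ℝ) * (β:ℝ)^Emax := by
          rw [← hmz1', ← hez]; exact_mod_cast hale
        have h2 : -(((β ^ t - 1 : ℤ) : ℝ) * (β:ℝ)^Emax) ≤ x + y := neg_le_of_abs_le hov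
        have h3 : ((-(β ^ t - 1) : ℤ):ℝ) * (β:ℝ)^Emax ≤ ((-β^t : ℤ):ℝ) * (β:ℝ)^Emax := by
          refine le_trans ?_ h1
          refine le_trans ?_ h2
          push_cast; ring_nf; rfl
        have h4 : ((-(β ^ t - 1) : ℤ):ℝ) ≤ ((-β^t : ℤ):ℝ) := le_of_mul_le_mul_right h3 hpmax
        have : (-(β ^ t - 1) : ℤ) ≤ -β^t := by exact_mod_cast h4
        have hpt : (0:ℤ) < β ^ t := pow_pos hb0 t
        omega
      have hmem := dekker_aux_mem β t Emin Emax hβ ht (mz-1) ez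
        (abs_le.mpr ⟨by omega, by omega⟩) hez1 hez2 hne
      have := hmin _ hmem hale
      rw [hz] at this
      have : (mz : ℤ) ≤ mz - 1 := by
        have h4 : ((mz:ℤ):ℝ) ≤ ((mz-1:ℤ):ℝ) := le_of_mul_le_mul_right this hpow
        exact_mod_cast h4
      omega
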